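/- For all indices i,k∈{1,2,3} and every constant vector c∈ℝ², the normal-normal component of Curl^s(φ_i c) has vanishing mean over the edge e_k: ∫₀¹ n_kᵀ [Curl^s(φ_i c)]((1−s)p_{k−1} + s p_{k+1}) n_k ds = 0. In particular, ∫_{e_k} (Curl^s(φ_i e_j))_{nn} ds = 0 for the coordinate unit vectors e₁=(1,0)ᵀ and e₂=(0,1)ᵀ. -/

import Mathlib

open Matrix intervalIntegral

/-- `Curl φ` of a vector field `φ : ℝ² → ℝ²`: the 2×2 matrix field whose `i`-th
row is `(curl φ_i)ᵀ = (−∂_{x₂} φ_i, ∂_{x₁} φ_i)`. -/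
noncomputable def Curl (r : (Fin 2 → ℝ) → Fin 2 → ℝ) (x : Fin 2 → ℝ) :
    Matrix (Fin 2) (Fin 2) ℝ :=
  Matrix.of fun i j =>
    if j = 0 then -(fderiv ℝ r x ![0, 1] i) else fderiv ℝ r x ![1, 0] i

/-- The symmetric part `Curl^s φ = (Curl φ + (Curl φ)ᵀ)/2`. -/
noncomputable def CurlS (r : (Fin 2 → ℝ) → Fin 2 → ℝ) (x : Fin 2 → ℝ) :
    Matrix (Fin 2) (Fin 2) ℝ :=
  (2⁻¹ : ℝ) • (Curl r x + (Curl r x)ᵀ)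

/-- Derivative of an affine function on `ℝ²`. -/
theorem affD (a b e : ℝ) (x : Fin 2 → ℝ) :
    HasFDerivAt (fun y : Fin 2 → ℝ => a * y 0 + b * y 1 + e)
      (a • (ContinuousLinearMap.proj 0 : (Fin 2 → ℝ) →L[ℝ] ℝ)
        + b • (ContinuousLinearMap.proj 1 : (Fin 2 → ℝ) →L[ℝ] ℝ)) x := by
  have h0 := (ContinuousLinearMap.proj (R := ℝ) (φ := fun _ : Fin 2 => ℝ) 0).hasFDerivAt (x := x)
  have h1 := (ContinuousLinearMap.proj (R := ℝ) (φ := fun _ : Fin 2 => ℝ) 1).hasFDerivAt (x := x)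
  exact ((h0.const_mul a).add (h1.const_mul b)).add_const e

/-- Explicit value of the derivative of a quadratic bubble times a constant vector. -/
theorem fdval (a b e a' b' e' : ℝ) (c : Fin 2 → ℝ) (x w : Fin 2 → ℝ) (j : Fin 2) :
    fderiv ℝ (fun y : Fin 2 → ℝ =>
        ((a * y 0 + b * y 1 + e) * (a' * y 0 + b' * y 1 + e')) • c) x w j
      = ((a * x 0 + b * x 1 + e) * (a' * w 0 + b' * w 1)
          + (a' * x 0 + b' * x 1 + e') * (a * w 0 + b * w 1)) * c j := by
  have h : HasFDerivAt (fun y : Fin 2 → ℝ =>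
      ((a * y 0 + b * y 1 + e) * (a' * y 0 + b' * y 1 + e')) • c) _ x :=
    (((affD a b e x).mul (affD a' b' e' x)).smul_const c)
  rw [h.fderiv]
  simp only [ContinuousLinearMap.smulRight_apply, ContinuousLinearMap.add_apply,
    ContinuousLinearMap.smul_apply, ContinuousLinearMap.proj_apply, Pi.smul_apply, smul_eq_mul]

/-- The final algebraic identity. -/
theorem alg (u u' v v' W W' δ nc : ℝ) (hδ : δ ≠ 0) (hv : v = δ * W) (hv' : v' = δ * W')
    (h0 : u * u' = 0) (h1 : (u + v) * (u' + v') = 0) :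
    nc * (W * u' + W' * u) + nc * (W * v' + W' * v) / 2 = 0 := by
  subst hv hv'
  have key : δ * (u * W' + u' * W + δ * W * W') = 0 := by linear_combination h1 - h0
  have key2 : u * W' + u' * W + δ * W * W' = 0 :=
    (mul_eq_zero.mp key).resolve_left hδ
  linear_combination nc * key2

/-- On a nondegenerate triangle with vertices `p₁, p₂, p₃` (indices mod 3),
barycentric coordinates `λ_k`, bubbles `φ_k = λ_{k−1} λ_{k+1}`, and unit normals
`n_k` to the edges `e_k`, for all `i, k` and every constant vector `c ∈ ℝ²`,
the normal-normal component of `Curl^s(φ_i c)` has vanishing mean over `e_k`: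
`∫₀¹ n_kᵀ [Curl^s(φ_i c)]((1−s)p_{k−1} + s p_{k+1}) n_k ds = 0`. -/
theorem curlS_bubble_vanishing_edge_moment
    (p : ZMod 3 → Fin 2 → ℝ) (hp : AffineIndependent ℝ p)
    (lam : ZMod 3 → (Fin 2 → ℝ) → ℝ)
    (hlam_aff : ∀ k, ∃ a b c : ℝ, ∀ x, lam k x = a * x 0 + b * x 1 + c)
    (hlam_val : ∀ k j, lam k (p j) = if k = j then 1 else 0)
    (n : ZMod 3 → Fin 2 → ℝ)
    (hn_unit : ∀ k, (n k 0) ^ 2 + (n k 1) ^ 2 = 1)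
    (hn_perp : ∀ k, n k ⬝ᵥ (fun j => p (k + 1) j - p (k - 1) j) = 0)
    (i k : ZMod 3) (c : Fin 2 → ℝ) :
    ∫ s in (0:ℝ)..1,
        n k ⬝ᵥ (CurlS (fun y => (lam (i - 1) y * lam (i + 1) y) • c)
          ((1 - s) • p (k - 1) + s • p (k + 1))) *ᵥ n k = 0 := by
  obtain ⟨a, b, e, hL⟩ := hlam_aff (i - 1)
  obtain ⟨a', b', e', hL'⟩ := hlam_aff (i + 1)
  -- abbreviations
  set N0 : ℝ := n k 0 with hN0
  set N1 : ℝ := n k 1 with hN1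
  set q0 : ℝ := p (k - 1) 0 with hq0
  set q1 : ℝ := p (k - 1) 1 with hq1
  set r0 : ℝ := p (k + 1) 0 with hr0
  set r1 : ℝ := p (k + 1) 1 with hr1
  -- vertex values of the bubble
  have hii : (i - 1 : ZMod 3) = i + 1 → False := by
    intro h
    have : (2 : ZMod 3) = 0 := by linear_combination -h
    exact absurd this (by decide)
  have h0m := hlam_val (i - 1) (k - 1)
  have h0p := hlam_val (i + 1) (k - 1)
  have h1m := hlam_val (i - 1) (k + 1)
  have h1p := hlam_val (i + 1) (k + 1)
  rw [hL] at h0m h1m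
  rw [hL'] at h0p h1p
  have e0 : (a * q0 + b * q1 + e) * (a' * q0 + b' * q1 + e') = 0 := by
    rw [← hq0, ← hq1] at h0m h0p
    rw [h0m, h0p]
    split_ifs with hA hB
    · exact absurd (hA.trans hB.symm) hii
    all_goals ring
  have e1 : (a * r0 + b * r1 + e) * (a' * r0 + b' * r1 + e') = 0 := by
    rw [← hr0, ← hr1] at h1m h1p
    rw [h1m, h1p]
    split_ifs with hA hB
    · exact absurd (hA.trans hB.symm) hii
    all_goals ring
  -- geometry of the edge
  have hunit : N0 ^ 2 + N1 ^ 2 = 1 := hn_unit k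
  have hperp : N0 * (r0 - q0) + N1 * (r1 - q1) = 0 := by
    have := hn_perp k
    simpa [dotProduct, Fin.sum_univ_two, ← hN0, ← hN1, ← hq0, ← hq1, ← hr0, ← hr1,
      mul_comm] using this
  have hd0 : r0 - q0 = ((r0 - q0) * N1 - (r1 - q1) * N0) * N1 := by
    linear_combination N0 * hperp - (r0 - q0) * hunit
  have hd1 : r1 - q1 = -(((r0 - q0) * N1 - (r1 - q1) * N0) * N0) := by
    linear_combination N1 * hperp - (r1 - q1) * hunit
  have hδ : (r0 - q0) * N1 - (r1 - q1) * N0 ≠ 0 := by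
    intro h
    have hpe : p (k + 1) = p (k - 1) := by
      funext j
      fin_cases j
      · show r0 = q0
        have := hd0; rw [h] at this; linarith
      · show r1 = q1
        have := hd1; rw [h] at this; linarith
    have hk : (k + 1 : ZMod 3) = k - 1 := hp.injective hpe
    have : (2 : ZMod 3) = 0 := by linear_combination hk
    exact absurd this (by decide)
  -- rewrite the integrand as an explicit linear polynomial in s
  have hLfun : lam (i - 1) = fun y => a * y 0 + b * y 1 + e := funext hL
  have hL'fun : lam (i + 1) = fun y => a' * y 0 + b' * y 1 + e' := funext hL'
  rw [hLfun, hL'fun]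
  have hint : ∀ s : ℝ,
      n k ⬝ᵥ (CurlS (fun y =>
          ((a * y 0 + b * y 1 + e) * (a' * y 0 + b' * y 1 + e')) • c)
        ((1 - s) • p (k - 1) + s • p (k + 1))) *ᵥ n k
      = (N0 * c 0 + N1 * c 1) *
          ((N1 * a - N0 * b) * (a' * q0 + b' * q1 + e')
            + (N1 * a' - N0 * b') * (a * q0 + b * q1 + e))
        + (N0 * c 0 + N1 * c 1) *
          ((N1 * a - N0 * b) * (a' * (r0 - q0) + b' * (r1 - q1))
            + (N1 * a' - N0 * b') * (a * (r0 - q0) + b * (r1 - q1))) * s := by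
    intro s
    simp only [CurlS, Curl, Matrix.smul_apply, Matrix.add_apply, Matrix.transpose_apply,
      Matrix.of_apply, dotProduct, mulVec, Fin.sum_univ_two, fdval,
      Matrix.cons_val_zero, Matrix.cons_val_one, Matrix.head_cons,
      Pi.add_apply, Pi.smul_apply, smul_eq_mul,
      if_true, reduceIte, if_neg (show ¬(1:Fin 2) = 0 by decide), ← hN0, ← hN1, ← hq0, ← hq1, ← hr0, ← hr1]
    ring
  simp only [hint]
  rw [integral_add intervalIntegrable_const (intervalIntegrable_id.const_mul _),
    integral_const, integral_const_mul, integral_id]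
  norm_num
  have halg := alg (a * q0 + b * q1 + e) (a' * q0 + b' * q1 + e')
    (a * (r0 - q0) + b * (r1 - q1)) (a' * (r0 - q0) + b' * (r1 - q1))
    (N1 * a - N0 * b) (N1 * a' - N0 * b')
    ((r0 - q0) * N1 - (r1 - q1) * N0) (N0 * c 0 + N1 * c 1) hδ
    (by linear_combination a * hd0 + b * hd1)
    (by linear_combination a' * hd0 + b' * hd1)
    e0 (by linear_combination e1)
  linear_combination halg
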